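/- Let H be an FH-algebra over a commutative ring k with FH-homomorphism f and right norm t. Then (f, S^{-1}(t_2), t_1) is a Frobenius system for H: for every a ∈ H one has ∑ S^{-1}(t_2) f(t_1 a) = a and ∑ f(a S^{-1}(t_2)) t_1 = a, where Δ(t) = ∑ t_1 ⊗ t_2 and S is the antipode. -/

import Mathlib

open TensorProduct

/-- `(φ, x, y)` is a Frobenius system for the `k`-algebra `A`. -/
def IsFrobeniusSystem (k : Type*) [CommRing k] (A : Type*) [Ring A] [Algebra k A]
    (φ : A →ₗ[k] k) {n : ℕ} (x y : Fin n → A) : Prop :=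
  ∀ a : A, (∑ i, φ (y i * a) • x i = a) ∧ (∑ i, φ (a * x i) • y i = a)

/-- Let `H` be an FH-algebra over a commutative ring `k`: a Hopf algebra, finitely generated
projective over `k`, with a Frobenius homomorphism `f` which is a right integral in `H*`
(`∑ f(a₁) a₂ = f(a) 1`).  Let `t` be the right norm (`f (t * a) = ε a`) and `Sinv` the inverse
of the antipode.  Then `(f, S⁻¹(t₂), t₁)` is a Frobenius system:
`∑ S⁻¹(t₂) f(t₁ a) = a = ∑ f(a S⁻¹(t₂)) t₁` for all `a`. -/
theorem stmt_4 (k : Type*) [CommRing k] (H : Type*) [Ring H] [HopfAlgebra k H]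
    (hfin : Module.Finite k H) (hproj : Module.Projective k H)
    (f : H →ₗ[k] k) (nn : ℕ) (x y : Fin nn → H) (hsys : IsFrobeniusSystem k H f x y)
    (hri : ∀ a : H,
      (TensorProduct.lid k H) ((TensorProduct.map f LinearMap.id) (Coalgebra.comul (R := k) a))
        = f a • (1 : H))
    (Sinv : H →ₗ[k] H)
    (hS1 : ∀ a : H, Sinv (HopfAlgebra.antipode (R := k) a) = a)
    (hS2 : ∀ a : H, HopfAlgebra.antipode (R := k) (Sinv a) = a)
    (t : H) (ht : ∀ a : H, f (t * a) = Coalgebra.counit (R := k) a) :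
    ∀ a : H,
      (TensorProduct.lid k H)
          ((TensorProduct.map (f ∘ₗ LinearMap.mulRight k a) Sinv) (Coalgebra.comul (R := k) t)) = a ∧
      (TensorProduct.rid k H)
          ((TensorProduct.map LinearMap.id (f ∘ₗ LinearMap.mulLeft k a ∘ₗ Sinv))
            (Coalgebra.comul (R := k) t)) = a := by
  classical
  let rt := Coalgebra.Repr.arbitrary k t
  -- Claim A: the right-integral property evaluated at `t * b`, in sum form.
  have claimA : ∀ (b : H) (rb : Coalgebra.Repr k b (H × H)),
      ∑ i ∈ rt.index, ∑ j ∈ rb.index, f (rt.left i * rb.left j) • (rt.right i * rb.right j)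
        = Coalgebra.counit (R := k) b • (1 : H) := by
    intro b rb
    have h := hri (t * b)
    rw [Bialgebra.comul_mul, ← rt.eq, ← rb.eq, Finset.sum_mul_sum, ht] at h
    simp only [Algebra.TensorProduct.tmul_mul_tmul] at h
    simpa [map_sum] using h
  -- Claim 1: `∑ f(t₁ b) • t₂ = S b`.
  have claim1 : ∀ b : H, ∑ i ∈ rt.index, f (rt.left i * b) • rt.right i
      = HopfAlgebra.antipode (R := k) b := by
    intro b
    let rb := Coalgebra.Repr.arbitrary k b
    let r1 : ∀ j : H × H, Coalgebra.Repr k (rb.left j) (H × H) :=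
      fun j => Coalgebra.Repr.arbitrary k _
    let r2 : ∀ j : H × H, Coalgebra.Repr k (rb.right j) (H × H) :=
      fun j => Coalgebra.Repr.arbitrary k _
    -- `∑ b₁ ⊗ (b₂ * S b₃) = b ⊗ 1`
    have hY : ∑ j ∈ rb.index, ∑ p ∈ (r1 j).index,
        (r1 j).left p ⊗ₜ[k] ((r1 j).right p * HopfAlgebra.antipode (R := k) (rb.right j))
        = b ⊗ₜ[k] (1 : H) := by
      have hco := Coalgebra.sum_tmul_tmul_eq rb r1 r2
      have h2 := congrArg (TensorProduct.map (LinearMap.id : H →ₗ[k] H)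
        (LinearMap.mul' k H ∘ₗ LinearMap.lTensor H (HopfAlgebra.antipode (R := k)))) hco
      simp only [map_sum, TensorProduct.map_tmul, LinearMap.coe_comp, Function.comp_apply,
        LinearMap.lTensor_tmul, LinearMap.mul'_apply, LinearMap.id_coe, id_eq] at h2
      rw [h2]
      have hr : ∀ j ∈ rb.index,
          ∑ q ∈ (r2 j).index,
            rb.left j ⊗ₜ[k] ((r2 j).left q * HopfAlgebra.antipode (R := k) ((r2 j).right q))
          = Coalgebra.counit (R := k) (rb.right j) • (rb.left j ⊗ₜ[k] (1 : H)) := by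
        intro j _
        rw [← TensorProduct.tmul_sum, HopfAlgebra.sum_mul_antipode_eq_smul (r2 j),
          TensorProduct.tmul_smul]
      rw [Finset.sum_congr rfl hr]
      have hb : ∑ j ∈ rb.index, Coalgebra.counit (R := k) (rb.right j) • rb.left j = b := by
        have h := congrArg (TensorProduct.rid k H) (Coalgebra.sum_tmul_counit_eq rb)
        simp only [map_sum, TensorProduct.rid_tmul, one_smul] at h
        exact h
      calc ∑ j ∈ rb.index, Coalgebra.counit (R := k) (rb.right j) • (rb.left j ⊗ₜ[k] (1 : H))
          = (∑ j ∈ rb.index, Coalgebra.counit (R := k) (rb.right j) • rb.left j) ⊗ₜ[k] (1 : H) := by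
            rw [TensorProduct.sum_tmul]
            exact Finset.sum_congr rfl fun j _ => by rw [TensorProduct.smul_tmul']
        _ = b ⊗ₜ[k] (1 : H) := by rw [hb]
    -- E1: apply `∑ᵢ f(t₁ᵢ · -) • (t₂ᵢ · -)` to hY.
    have E1 : ∑ i ∈ rt.index, f (rt.left i * b) • rt.right i
        = ∑ i ∈ rt.index, ∑ j ∈ rb.index, ∑ p ∈ (r1 j).index,
            f (rt.left i * (r1 j).left p) •
              (rt.right i * ((r1 j).right p * HopfAlgebra.antipode (R := k) (rb.right j))) := by
      have h := congrArg (fun z : H ⊗[k] H => ∑ i ∈ rt.index,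
        (TensorProduct.lid k H) ((TensorProduct.map (f ∘ₗ LinearMap.mulLeft k (rt.left i))
          (LinearMap.mulLeft k (rt.right i))) z)) hY
      simpa [map_sum, mul_one] using h.symm
    -- E2: regroup and use Claim A.
    have E2 : ∑ i ∈ rt.index, ∑ j ∈ rb.index, ∑ p ∈ (r1 j).index,
        f (rt.left i * (r1 j).left p) •
          (rt.right i * ((r1 j).right p * HopfAlgebra.antipode (R := k) (rb.right j)))
        = HopfAlgebra.antipode (R := k) b := by
      rw [Finset.sum_comm]
      have step : ∀ j ∈ rb.index,
          ∑ i ∈ rt.index, ∑ p ∈ (r1 j).index,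
            f (rt.left i * (r1 j).left p) •
              (rt.right i * ((r1 j).right p * HopfAlgebra.antipode (R := k) (rb.right j)))
          = Coalgebra.counit (R := k) (rb.left j) • HopfAlgebra.antipode (R := k) (rb.right j) := by
        intro j _
        have h := congrArg (fun z : H => z * HopfAlgebra.antipode (R := k) (rb.right j))
          (claimA (rb.left j) (r1 j))
        simpa [Finset.sum_mul, smul_mul_assoc, mul_assoc, one_mul] using h
      rw [Finset.sum_congr rfl step]
      have hb : ∑ j ∈ rb.index, Coalgebra.counit (R := k) (rb.left j) • rb.right j = b := by
        have h := congrArg (TensorProduct.lid k H) (Coalgebra.sum_counit_tmul_eq rb)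
        simp only [map_sum, TensorProduct.lid_tmul, one_smul] at h
        exact h
      calc ∑ j ∈ rb.index,
            Coalgebra.counit (R := k) (rb.left j) • HopfAlgebra.antipode (R := k) (rb.right j)
          = HopfAlgebra.antipode (R := k)
              (∑ j ∈ rb.index, Coalgebra.counit (R := k) (rb.left j) • rb.right j) := by
            rw [map_sum]
            exact Finset.sum_congr rfl fun j _ => (map_smul _ _ _).symm
        _ = HopfAlgebra.antipode (R := k) b := by rw [hb]
    exact E1.trans E2
  -- Claim 1': `∑ f(t₁ b) • S⁻¹ t₂ = b`.
  have claim1' : ∀ b : H, ∑ i ∈ rt.index, f (rt.left i * b) • Sinv (rt.right i) = b := by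
    intro b
    have h := congrArg Sinv (claim1 b)
    simpa [map_sum, hS1] using h
  intro a
  constructor
  · rw [← rt.eq]
    simpa [map_sum] using claim1' a
  · rw [← rt.eq]
    have goal2 : ∑ i ∈ rt.index, f (a * Sinv (rt.right i)) • rt.left i = a := by
      calc ∑ i ∈ rt.index, f (a * Sinv (rt.right i)) • rt.left i
          = ∑ i ∈ rt.index, f (a * Sinv (rt.right i)) • ∑ m, f (rt.left i * x m) • y m := by
            exact Finset.sum_congr rfl fun i _ => by rw [(hsys (rt.left i)).2]
        _ = ∑ m, (∑ i ∈ rt.index, f (rt.left i * x m) * f (a * Sinv (rt.right i))) • y m := by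
            simp_rw [Finset.smul_sum, smul_smul]
            rw [Finset.sum_comm]
            simp_rw [Finset.sum_smul]
            exact Finset.sum_congr rfl fun m _ => Finset.sum_congr rfl fun i _ => by
              rw [mul_comm]
        _ = ∑ m, f (a * ∑ i ∈ rt.index, f (rt.left i * x m) • Sinv (rt.right i)) • y m := by
            refine Finset.sum_congr rfl fun m _ => ?_
            congr 1
            rw [Finset.mul_sum, map_sum]
            exact Finset.sum_congr rfl fun i _ => by
              rw [mul_smul_comm, map_smul, smul_eq_mul]
        _ = ∑ m, f (a * x m) • y m := by
            exact Finset.sum_congr rfl fun m _ => by rw [claim1' (x m)]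
        _ = a := (hsys a).2
    simpa [map_sum] using goal2
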